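/- For every d ∈ ℓ∞ the following three inequalities hold: (a) ∑_{k=1}^∞ |Λ(d)_k|² ≤ 4·(1 + π²/18)·‖d‖_∞²; (b) sup_{k≥1} |Λ(d)_k| ≤ ‖d‖_∞; (c) sup_{n≥1} |∑_{k=1}^n Λ(d)_k| ≤ ‖d‖_∞. -/

import Mathlib

open Complex Filter Topology

noncomputable section

/-- **Statement 10.** Properties of the averaging operator `Λ` on `ℓ∞`
(with `n_l = l³`, `d₀ = 0`): for every bounded sequence `d` with `|d_k| ≤ M` (k ≥ 1),
(a) `∑ |Λ(d)_k|² ≤ 4(1 + π²/18)·M²`, (b) `sup_k |Λ(d)_k| ≤ M`,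
(c) `sup_n |∑_{k=1}^n Λ(d)_k| ≤ M`. -/
theorem lambda_operator_bounds
    (d : ℕ → ℂ) (hd0 : d 0 = 0) (M : ℝ)
    (hM : ∀ k : ℕ, 1 ≤ k → ‖d k‖ ≤ M)
    (Λd : ℕ → ℂ)
    (hΛ : ∀ l : ℕ, 1 ≤ l → ∀ k : ℕ, (l - 1) ^ 3 < k → k ≤ l ^ 3 →
      Λd k = (d l - d (l - 1)) / ((l ^ 3 - (l - 1) ^ 3 : ℕ) : ℂ)) :
    (∀ n : ℕ, ∑ k ∈ Finset.Icc 1 n, (‖Λd k‖) ^ 2 ≤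
        4 * (1 + Real.pi ^ 2 / 18) * M ^ 2) ∧
    (∀ k : ℕ, 1 ≤ k → ‖Λd k‖ ≤ M) ∧
    (∀ n : ℕ, 1 ≤ n → ‖∑ k ∈ Finset.Icc 1 n, Λd k‖ ≤ M) := by
  have hM0 : 0 ≤ M := le_trans (norm_nonneg _) (hM 1 le_rfl)
  set N : ℕ → ℕ := fun l => (l + 1) ^ 3 - l ^ 3 with hNdef
  have hNval : ∀ l, N l = 3 * l ^ 2 + 3 * l + 1 := by
    intro l
    have h : (l + 1) ^ 3 = l ^ 3 + (3 * l ^ 2 + 3 * l + 1) := by ring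
    simp [hNdef, h]
  have hNpos : ∀ l, 0 < N l := fun l => by rw [hNval]; omega
  have hNc : ∀ l, ((N l : ℂ)) ≠ 0 := fun l => Nat.cast_ne_zero.mpr (hNpos l).ne'
  have hNr : ∀ l, (0 : ℝ) < (N l : ℝ) := fun l => by exact_mod_cast hNpos l
  have hcube : ∀ l : ℕ, l ^ 3 ≤ (l + 1) ^ 3 := fun l => Nat.pow_le_pow_left (Nat.le_succ l) 3
  have hblock : ∀ l k, l ^ 3 < k → k ≤ (l + 1) ^ 3 →
      Λd k = (d (l + 1) - d l) / (N l : ℂ) := by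
    intro l k h1 h2
    have h := hΛ (l + 1) (Nat.le_add_left 1 l) k (by simpa using h1) (by simpa using h2)
    simpa [hNdef] using h
  have hIcc : ∀ m : ℕ, Finset.Icc 1 m = Finset.Ioc 0 m := fun m => by
    rw [← Finset.Icc_add_one_left_eq_Ioc, zero_add]
  -- existence of the block index
  have hex : ∀ k : ℕ, 1 ≤ k → ∃ l, l ^ 3 < k ∧ k ≤ (l + 1) ^ 3 := by
    intro k hk
    have hP : ∃ m, k ≤ (m + 1) ^ 3 :=
      ⟨k, le_trans (Nat.le_succ k) (Nat.le_self_pow (by norm_num) _)⟩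
    refine ⟨Nat.find hP, ?_, Nat.find_spec hP⟩
    rcases Nat.eq_zero_or_pos (Nat.find hP) with h | h
    · simp [h]; omega
    · have hmin := Nat.find_min hP (Nat.sub_lt h Nat.one_pos)
      have : Nat.find hP - 1 + 1 = Nat.find hP := Nat.succ_pred_eq_of_pos h
      rw [this] at hmin
      omega
  -- abs of d values
  have hdabs : ∀ l : ℕ, ‖d l‖ ≤ M := by
    intro l
    rcases Nat.eq_zero_or_pos l with h | h
    · simp [h, hd0, hM0]
    · exact hM l h
  -- bound on increments
  have hnum : ∀ l, ‖d (l + 1) - d l‖ ≤ 2 * M := by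
    intro l
    calc ‖d (l + 1) - d l‖ ≤ ‖d (l + 1)‖ + ‖d l‖ := by
          simpa [sub_eq_add_neg] using norm_add_le (d (l + 1)) (-(d l))
      _ ≤ M + M := add_le_add (hdabs _) (hdabs _)
      _ = 2 * M := by ring
  have hnum0 : ‖d 1 - d 0‖ ≤ M := by simpa [hd0] using hdabs 1
  have habsval : ∀ l, ‖(d (l + 1) - d l) / (N l : ℂ)‖ =
      ‖d (l + 1) - d l‖ / (N l : ℝ) := by
    intro l
    rw [norm_div, Complex.norm_natCast]
  -- (b)
  have partB : ∀ k : ℕ, 1 ≤ k → ‖Λd k‖ ≤ M := by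
    intro k hk
    obtain ⟨l, h1, h2⟩ := hex k hk
    rw [hblock l k h1 h2, habsval]
    rcases Nat.eq_zero_or_pos l with h | h
    · subst h
      have : N 0 = 1 := by rw [hNval]; norm_num
      simpa [this] using hnum0
    · have hN7 : (7 : ℝ) ≤ (N l : ℝ) := by
        have : 7 ≤ N l := by rw [hNval]; nlinarith
        exact_mod_cast this
      rw [div_le_iff₀ (hNr l)]
      nlinarith [hnum l]
  -- sum over a block
  have hSblock : ∀ l, ∑ k ∈ Finset.Ioc (l ^ 3) ((l + 1) ^ 3), Λd k = d (l + 1) - d l := by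
    intro l
    rw [Finset.sum_congr rfl (fun k hk => hblock l k (Finset.mem_Ioc.mp hk).1
      (Finset.mem_Ioc.mp hk).2)]
    rw [Finset.sum_const, Nat.card_Ioc, nsmul_eq_mul]
    exact mul_div_cancel₀ _ (hNc l)
  -- telescoping
  have hS : ∀ l, ∑ k ∈ Finset.Ioc 0 (l ^ 3), Λd k = d l := by
    intro l
    induction l with
    | zero => simp [hd0]
    | succ m ih =>
        rw [← Finset.sum_Ioc_consecutive _ (Nat.zero_le (m ^ 3)) (hcube m), ih, hSblock]
        ring
  -- (c)
  have partC : ∀ n : ℕ, 1 ≤ n → ‖∑ k ∈ Finset.Icc 1 n, Λd k‖ ≤ M := by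
    intro n hn
    obtain ⟨l, h1, h2⟩ := hex n hn
    set a : ℕ := n - l ^ 3 with hadef
    have ha2 : a ≤ N l := Nat.sub_le_sub_right h2 _
    have hs1 : ∑ k ∈ Finset.Icc 1 n, Λd k
        = d l + (a : ℂ) * ((d (l + 1) - d l) / (N l : ℂ)) := by
      rw [hIcc, ← Finset.sum_Ioc_consecutive _ (Nat.zero_le (l ^ 3)) (le_of_lt h1), hS l]
      congr 1
      rw [Finset.sum_congr rfl (fun k hk => hblock l k (Finset.mem_Ioc.mp hk).1
        (le_trans (Finset.mem_Ioc.mp hk).2 h2))]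
      rw [Finset.sum_const, Nat.card_Ioc, nsmul_eq_mul]
    have hcomb : d l + (a : ℂ) * ((d (l + 1) - d l) / (N l : ℂ))
        = (((N l - a : ℕ) : ℂ) / (N l : ℂ)) * d l + ((a : ℂ) / (N l : ℂ)) * d (l + 1) := by
      have h0 := hNc l
      rw [Nat.cast_sub ha2]
      field_simp
      ring
    rw [hs1, hcomb]
    have hc1 : ‖(((N l - a : ℕ) : ℂ) / (N l : ℂ)) * d l‖
        = ((N l - a : ℕ) : ℝ) / (N l : ℝ) * ‖d l‖ := by
      rw [norm_mul, norm_div, Complex.norm_natCast, Complex.norm_natCast]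
    have hc2 : ‖((a : ℂ) / (N l : ℂ)) * d (l + 1)‖
        = (a : ℝ) / (N l : ℝ) * ‖d (l + 1)‖ := by
      rw [norm_mul, norm_div, Complex.norm_natCast, Complex.norm_natCast]
    calc ‖(((N l - a : ℕ) : ℂ) / (N l : ℂ)) * d l
            + ((a : ℂ) / (N l : ℂ)) * d (l + 1)‖
        ≤ ‖(((N l - a : ℕ) : ℂ) / (N l : ℂ)) * d l‖
            + ‖((a : ℂ) / (N l : ℂ)) * d (l + 1)‖ := norm_add_le _ _
      _ = ((N l - a : ℕ) : ℝ) / (N l : ℝ) * ‖d l‖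
            + (a : ℝ) / (N l : ℝ) * ‖d (l + 1)‖ := by rw [hc1, hc2]
      _ ≤ ((N l - a : ℕ) : ℝ) / (N l : ℝ) * M + (a : ℝ) / (N l : ℝ) * M := by
          refine add_le_add (mul_le_mul_of_nonneg_left (hdabs l) (by positivity))
            (mul_le_mul_of_nonneg_left (hdabs (l + 1)) (by positivity))
      _ = M := by
          have h0 := (hNr l).ne'
          rw [Nat.cast_sub ha2]
          field_simp
          ring
  -- (a) block sums of squares
  have hsq : ∀ l, ∑ k ∈ Finset.Ioc (l ^ 3) ((l + 1) ^ 3), (‖Λd k‖) ^ 2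
      = (‖d (l + 1) - d l‖) ^ 2 / (N l : ℝ) := by
    intro l
    have : ∀ k ∈ Finset.Ioc (l ^ 3) ((l + 1) ^ 3), (‖Λd k‖) ^ 2
        = (‖d (l + 1) - d l‖ / (N l : ℝ)) ^ 2 := by
      intro k hk
      rw [hblock l k (Finset.mem_Ioc.mp hk).1 (Finset.mem_Ioc.mp hk).2, habsval]
    rw [Finset.sum_congr rfl this, Finset.sum_const, Nat.card_Ioc, nsmul_eq_mul]
    have hN0 : (N l : ℝ) ≠ 0 := (hNr l).ne'
    field_simp
    ring
  have hsplit : ∀ L : ℕ, ∑ k ∈ Finset.Ioc 0 (L ^ 3), (‖Λd k‖) ^ 2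
      = ∑ l ∈ Finset.range L, (‖d (l + 1) - d l‖) ^ 2 / (N l : ℝ) := by
    intro L
    induction L with
    | zero => simp
    | succ m ih =>
        rw [← Finset.sum_Ioc_consecutive _ (Nat.zero_le (m ^ 3)) (hcube m), ih,
          Finset.sum_range_succ, hsq]
  have partA : ∀ n : ℕ, ∑ k ∈ Finset.Icc 1 n, (‖Λd k‖) ^ 2 ≤
      4 * (1 + Real.pi ^ 2 / 18) * M ^ 2 := by
    intro n
    have hsub : Finset.Ioc 0 n ⊆ Finset.Ioc 0 (n ^ 3) := by
      apply Finset.Ioc_subset_Ioc_right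
      exact Nat.le_self_pow (by norm_num) n
    have h1 : ∑ k ∈ Finset.Icc 1 n, (‖Λd k‖) ^ 2
        ≤ ∑ k ∈ Finset.Ioc 0 (n ^ 3), (‖Λd k‖) ^ 2 := by
      rw [hIcc]
      exact Finset.sum_le_sum_of_subset_of_nonneg hsub (fun k _ _ => sq_nonneg _)
    rw [hsplit n] at h1
    refine le_trans h1 ?_
    -- bound the block sums
    rcases Nat.eq_zero_or_pos n with h | h
    · simp only [h, Finset.range_zero, Finset.sum_empty]
      nlinarith [sq_nonneg M, sq_nonneg Real.pi]
    · obtain ⟨m, rfl⟩ : ∃ m, n = m + 1 := ⟨n - 1, by omega⟩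
      rw [Finset.sum_range_succ']
      have hterm0 : (‖d (0 + 1) - d 0‖) ^ 2 / (N 0 : ℝ) ≤ M ^ 2 := by
        have hN0 : N 0 = 1 := by rw [hNval]; norm_num
        have := hnum0
        rw [hN0]
        simp only [Nat.cast_one, div_one]
        nlinarith [norm_nonneg (d 1 - d 0), hd0]
      have hterms : ∀ i ∈ Finset.range m,
          (‖d (i + 1 + 1) - d (i + 1)‖) ^ 2 / (N (i + 1) : ℝ)
          ≤ (4 * M ^ 2 / 3) * (1 / ((i + 1 : ℕ) : ℝ) ^ 2) := by
        intro i _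
        have hNge : (3 * ((i + 1 : ℕ) : ℝ) ^ 2) ≤ (N (i + 1) : ℝ) := by
          have : 3 * (i + 1) ^ 2 ≤ N (i + 1) := by rw [hNval]; nlinarith
          exact_mod_cast this
        have hpos : (0 : ℝ) < 3 * ((i + 1 : ℕ) : ℝ) ^ 2 := by positivity
        have hnum2 : (‖d (i + 1 + 1) - d (i + 1)‖) ^ 2 ≤ 4 * M ^ 2 := by
          nlinarith [hnum (i + 1), norm_nonneg (d (i + 1 + 1) - d (i + 1))]
        calc (‖d (i + 1 + 1) - d (i + 1)‖) ^ 2 / (N (i + 1) : ℝ)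
            ≤ (4 * M ^ 2) / (3 * ((i + 1 : ℕ) : ℝ) ^ 2) :=
              div_le_div₀ (by positivity) hnum2 hpos hNge
          _ = (4 * M ^ 2 / 3) * (1 / ((i + 1 : ℕ) : ℝ) ^ 2) := by
              field_simp
      have hbasel : ∑ i ∈ Finset.range m, (1 / ((i + 1 : ℕ) : ℝ) ^ 2) ≤ Real.pi ^ 2 / 6 := by
        have hsum := hasSum_zeta_two
        have h0 : ∑ i ∈ Finset.range m, (1 / ((i + 1 : ℕ) : ℝ) ^ 2)
            = ∑ j ∈ Finset.range (m + 1), (1 / (j : ℝ) ^ 2) := by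
          rw [Finset.sum_range_succ']
          simp
        rw [h0]
        refine le_trans (Summable.sum_le_tsum _ (fun j _ => by positivity) hsum.summable) ?_
        rw [hsum.tsum_eq]
      have step1 := add_le_add (Finset.sum_le_sum hterms) hterm0
      refine le_trans step1 ?_
      rw [← Finset.mul_sum]
      nlinarith [mul_nonneg (sq_nonneg M) (sub_nonneg.mpr hbasel), sq_nonneg M,
        sq_nonneg Real.pi]
  exact ⟨partA, partB, partC⟩
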